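/- Let G=(W,E) be a finite simple graph with W nonempty and let k be a natural number. Construct the parliamentary election whose running parties are p_1, o_2, and o_3, with spoiler parties S = {s_w : w ∈ W} available for addition, and with five voters per vertex w ∈ W: two voters ranking p_1 ≻ o_2 ≻ (all remaining parties in some fixed order); two voters ranking o_2 ≻ p_1 ≻ (all remaining parties); and one voter ranking the parties {s_u : u ∈ N[w]} first (in some fixed order), then o_2, then p_1, then all remaining parties. Let the coalition be C = {p_1} and the electoral threshold be τ = 2/5, so a party is active iff it receives at least 2|W| votes. Then G has a dominating set of size at most k if and only if there exists a set S⁺ ⊆ S with |S⁺| ≤ k such that, in the election whose running parties are {p_1, o_2, o_3} ∪ S⁺, the active-vote fraction of {p_1} is at least 1/2. -/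

import Mathlib

open scoped Classical

section Defs

variable {U V : Type*}

/-- `p` is the most-preferred member of the running set `P` under the linear order `L`
(greater means more preferred). -/
def TopOf (L : LinearOrder U) (P : Finset U) (p : U) : Prop :=
  p ∈ P ∧ ∀ q ∈ P, q ≠ p → L.lt q p

/-- Number of voters whose most-preferred running party lies in `A`. -/
noncomputable def votes [Fintype V] (pref : V → LinearOrder U) (P A : Finset U) : ℕ :=
  (Finset.univ.filter fun v : V => ∃ p ∈ A, TopOf (pref v) P p).card

/-- Fraction of voters whose most-preferred running party lies in `A`. -/
noncomputable def voteFrac [Fintype V] (pref : V → LinearOrder U) (P A : Finset U) : ℚ :=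
  (votes pref P A : ℚ) / (Fintype.card V : ℚ)

/-- Total number of votes received by active parties (receiving at least `T` votes) among `A`. -/
noncomputable def activeVotes [Fintype V] (pref : V → LinearOrder U) (P : Finset U) (T : ℕ)
    (A : Finset U) : ℕ :=
  ∑ p ∈ A, if T ≤ votes pref P {p} then votes pref P {p} else 0

/-- Active-vote fraction of `A`. -/
noncomputable def activeFrac [Fintype V] (pref : V → LinearOrder U) (P : Finset U) (T : ℕ)
    (A : Finset U) : ℚ :=
  (activeVotes pref P T A : ℚ) / (activeVotes pref P T P : ℚ)

/-- The linear order `L` respects the tier function `t` (smaller tier = more preferred). -/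
def PrefTiers (L : LinearOrder U) (t : U → ℕ) : Prop :=
  ∀ a b : U, t a < t b → L.lt b a

/-- Pairs `(p, q)` with `p ≻ q` under `L` and `q ≻ p` under `L'`. -/
noncomputable def invPairs [Fintype U] (L L' : LinearOrder U) : Finset (U × U) :=
  Finset.univ.filter fun pq : U × U => L.lt pq.2 pq.1 ∧ L'.lt pq.1 pq.2

/-- Swap-bribery cost of replacing `L` by `L'` with swap-price function `sw`. -/
noncomputable def swapCost [Fintype U] (L L' : LinearOrder U) (sw : U → U → ℝ) : ℝ :=
  ∑ pq ∈ invPairs L L', sw pq.1 pq.2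

end Defs

/-- Two tops of the same running set coincide. -/
theorem topOf_eq' {U : Type*} {L : LinearOrder U} {P : Finset U} {p q : U}
    (hp : TopOf L P p) (hq : TopOf L P q) : p = q := by
  by_contra hne
  have h1 : L.lt q p := hp.2 q hq.1 (fun h => hne h.symm)
  have h2 : L.lt p q := hq.2 p hp.1 hne
  letI := L
  exact absurd (show q < p from h1) (lt_asymm (show p < q from h2))

/-- Instance-agnostic computation of `votes`. -/
theorem votes_eq_card {U V : Type*} [Fintype V] (pref : V → LinearOrder U) (P A : Finset U)
    (s : Finset V) (h : ∀ v : V, (∃ p ∈ A, TopOf (pref v) P p) ↔ v ∈ s) :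
    votes pref P A = s.card := by
  unfold votes
  congr 1
  ext v
  simp [h v]

/-- Instance-agnostic bound on `votes`. -/
theorem votes_le_card {U V : Type*} [Fintype V] (pref : V → LinearOrder U) (P A : Finset U)
    (s : Finset V) (h : ∀ v : V, (∃ p ∈ A, TopOf (pref v) P p) → v ∈ s) :
    votes pref P A ≤ s.card := by
  unfold votes
  refine Finset.card_le_card fun v hv => h v (Finset.mem_filter.mp hv).2

/-- Election (adding opposition parties, J objective, threshold $τ = 2/5$,
i.e. active iff at least $2|W|$ votes): running parties $p_1$ (= `Sum.inr 0`),
$o_2$ (= `Sum.inr 1`), $o_3$ (= `Sum.inr 2`); spoilers $s_w$ (= `Sum.inl w`).  Per vertex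
$w$: two voters rank $p_1 ≻ o_2 ≻$ rest, two rank $o_2 ≻ p_1 ≻$ rest, and one ranks
$\{s_u : u ∈ N[w]\}$ first, then $o_2$, then $p_1$, then the rest.  Then $G$ has a dominating
set of size at most $k$ iff at most $k$ spoilers can be added so that $\{p_1\}$ gets
active-vote fraction at least $1/2$. -/
theorem aop_threshold_dominating_set_reduction
    {W : Type*} [Fintype W] [DecidableEq W] [Nonempty W]
    (G : SimpleGraph W) [DecidableRel G.Adj] (k : ℕ)
    (pref : W × Fin 5 → LinearOrder (W ⊕ Fin 3))
    (hpref : ∀ (w : W) (i : Fin 5), PrefTiers (pref (w, i))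
      (if i = 0 ∨ i = 1 then
        Sum.elim (fun _ => (2 : ℕ))
          (fun j : Fin 3 => if j = 0 then 0 else if j = 1 then 1 else 2)
      else if i = 2 ∨ i = 3 then
        Sum.elim (fun _ => (2 : ℕ))
          (fun j : Fin 3 => if j = 1 then 0 else if j = 0 then 1 else 2)
      else
        Sum.elim (fun u => if u = w ∨ G.Adj w u then (0 : ℕ) else 3)
          (fun j : Fin 3 => if j = 1 then 1 else if j = 0 then 2 else 3))) :
    (∃ W' : Finset W, W'.card ≤ k ∧ ∀ w : W, ∃ u ∈ W', u = w ∨ G.Adj u w) ↔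
    (∃ Sp : Finset (W ⊕ Fin 3), Sp ⊆ Finset.univ.image Sum.inl ∧ Sp.card ≤ k ∧
      (1 : ℚ) / 2 ≤ activeFrac pref ({Sum.inr 0, Sum.inr 1, Sum.inr 2} ∪ Sp)
        (2 * Fintype.card W) {Sum.inr 0}) := by
  classical
  have hn0 : 0 < Fintype.card W := Fintype.card_pos
  set n := Fintype.card W with hn
  -- main computational lemma
  have main : ∀ Sp : Finset (W ⊕ Fin 3), Sp ⊆ Finset.univ.image Sum.inl →
      ((1 : ℚ) / 2 ≤ activeFrac pref ({Sum.inr 0, Sum.inr 1, Sum.inr 2} ∪ Sp)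
        (2 * n) {Sum.inr 0} ↔
        ∀ w : W, ∃ u, (u = w ∨ G.Adj w u) ∧ Sum.inl u ∈ Sp) := by
    intro Sp hSp
    set P : Finset (W ⊕ Fin 3) := {Sum.inr 0, Sum.inr 1, Sum.inr 2} ∪ Sp with hPdef
    set Dom : W → Prop := fun w => ∃ u, (u = w ∨ G.Adj w u) ∧ Sum.inl u ∈ Sp with hDomdef
    have hp0P : (Sum.inr 0 : W ⊕ Fin 3) ∈ P := by simp [hPdef]
    have hp1P : (Sum.inr 1 : W ⊕ Fin 3) ∈ P := by simp [hPdef]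
    have hPcases : ∀ q ∈ P, (q = Sum.inr 0 ∨ q = Sum.inr 1 ∨ q = Sum.inr 2) ∨
        (∃ u, q = Sum.inl u ∧ Sum.inl u ∈ Sp) := by
      intro q hq
      rcases Finset.mem_union.mp hq with h | h
      · left; simpa using h
      · obtain ⟨u, -, rfl⟩ := Finset.mem_image.mp (hSp h)
        exact Or.inr ⟨u, rfl, h⟩
    -- tier facts
    have htier01 : ∀ (w : W) (i : Fin 5), i = 0 ∨ i = 1 →
        PrefTiers (pref (w, i)) (Sum.elim (fun _ => (2 : ℕ))
          (fun j : Fin 3 => if j = 0 then 0 else if j = 1 then 1 else 2)) := by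
      intro w i hi
      have h := hpref w i
      rwa [if_pos hi] at h
    have htier23 : ∀ (w : W) (i : Fin 5), i = 2 ∨ i = 3 →
        PrefTiers (pref (w, i)) (Sum.elim (fun _ => (2 : ℕ))
          (fun j : Fin 3 => if j = 1 then 0 else if j = 0 then 1 else 2)) := by
      intro w i hi
      have h := hpref w i
      rcases hi with rfl | rfl <;> simpa using h
    have htier4 : ∀ w : W,
        PrefTiers (pref (w, 4)) (Sum.elim (fun u => if u = w ∨ G.Adj w u then (0 : ℕ) else 3)
          (fun j : Fin 3 => if j = 1 then 1 else if j = 0 then 2 else 3)) := by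
      intro w
      have h := hpref w 4
      simpa using h
    -- top facts
    have top01 : ∀ (w : W) (i : Fin 5), i = 0 ∨ i = 1 → TopOf (pref (w, i)) P (Sum.inr 0) := by
      intro w i hi
      refine ⟨hp0P, fun q hq hne => ?_⟩
      refine htier01 w i hi _ _ ?_
      rcases hPcases q hq with (rfl | rfl | rfl) | ⟨u, rfl, -⟩
      · exact absurd rfl hne
      · simp
      · simp
      · simp
    have top23 : ∀ (w : W) (i : Fin 5), i = 2 ∨ i = 3 → TopOf (pref (w, i)) P (Sum.inr 1) := by
      intro w i hi
      refine ⟨hp1P, fun q hq hne => ?_⟩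
      refine htier23 w i hi _ _ ?_
      rcases hPcases q hq with (rfl | rfl | rfl) | ⟨u, rfl, -⟩
      · simp
      · exact absurd rfl hne
      · simp
      · simp
    have top4n : ∀ w : W, ¬ Dom w → TopOf (pref (w, 4)) P (Sum.inr 1) := by
      intro w hd
      refine ⟨hp1P, fun q hq hne => ?_⟩
      refine htier4 w _ _ ?_
      rcases hPcases q hq with (rfl | rfl | rfl) | ⟨u, rfl, hu⟩
      · simp
      · exact absurd rfl hne
      · simp
      · have : ¬ (u = w ∨ G.Adj w u) := fun h => hd ⟨u, h, hu⟩
        simp [this]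
    have top4d : ∀ w : W, Dom w → ∀ j : Fin 3, ¬ TopOf (pref (w, 4)) P (Sum.inr j) := by
      rintro w ⟨u, hu, huSp⟩ j htop
      have hmem : (Sum.inl u : W ⊕ Fin 3) ∈ P := Finset.mem_union_right _ huSp
      have h1 : (pref (w, 4)).lt (Sum.inr j) (Sum.inl u) := by
        refine htier4 w _ _ ?_
        rw [Sum.elim_inl, if_pos hu]
        fin_cases j <;> simp
      have h2 : (pref (w, 4)).lt (Sum.inl u) (Sum.inr j) := htop.2 _ hmem (by simp)
      letI := pref (w, 4)
      exact absurd (show Sum.inr j < Sum.inl u from h1)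
        (lt_asymm (show Sum.inl u < Sum.inr j from h2))
    -- characterizations of who votes for whom
    have hchar0 : ∀ (w : W) (i : Fin 5),
        TopOf (pref (w, i)) P (Sum.inr 0) ↔ (i = 0 ∨ i = 1) := by
      intro w i
      fin_cases i
      · exact iff_of_true (top01 w 0 (Or.inl rfl)) (by decide)
      · exact iff_of_true (top01 w 1 (Or.inr rfl)) (by decide)
      · refine iff_of_false (fun h => ?_) (by decide)
        exact absurd (topOf_eq' h (top23 w 2 (Or.inl rfl))) (by simp)
      · refine iff_of_false (fun h => ?_) (by decide)
        exact absurd (topOf_eq' h (top23 w 3 (Or.inr rfl))) (by simp)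
      · refine iff_of_false (fun h => ?_) (by decide)
        by_cases hd : Dom w
        · exact top4d w hd 0 h
        · exact absurd (topOf_eq' h (top4n w hd)) (by simp)
    have hchar1 : ∀ (w : W) (i : Fin 5),
        TopOf (pref (w, i)) P (Sum.inr 1) ↔ (i = 2 ∨ i = 3 ∨ (i = 4 ∧ ¬ Dom w)) := by
      intro w i
      fin_cases i
      · refine iff_of_false (fun h => ?_) (by simp)
        exact absurd (topOf_eq' h (top01 w 0 (Or.inl rfl))) (by simp)
      · refine iff_of_false (fun h => ?_) (by simp)
        exact absurd (topOf_eq' h (top01 w 1 (Or.inr rfl))) (by simp)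
      · exact iff_of_true (top23 w 2 (Or.inl rfl)) (by simp)
      · exact iff_of_true (top23 w 3 (Or.inr rfl)) (by simp)
      · by_cases hd : Dom w
        · refine iff_of_false (top4d w hd 1) ?_
          simp [hd]
        · exact iff_of_true (top4n w hd) (by simp [hd])
    have hchar2 : ∀ (w : W) (i : Fin 5), ¬ TopOf (pref (w, i)) P (Sum.inr 2) := by
      intro w i
      fin_cases i
      · exact fun h => absurd (topOf_eq' h (top01 w 0 (Or.inl rfl))) (by simp)
      · exact fun h => absurd (topOf_eq' h (top01 w 1 (Or.inr rfl))) (by simp)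
      · exact fun h => absurd (topOf_eq' h (top23 w 2 (Or.inl rfl))) (by simp)
      · exact fun h => absurd (topOf_eq' h (top23 w 3 (Or.inr rfl))) (by simp)
      · intro h
        by_cases hd : Dom w
        · exact top4d w hd 2 h
        · exact absurd (topOf_eq' h (top4n w hd)) (by simp)
    -- vote counts
    have v0 : votes pref P {Sum.inr 0} = 2 * n := by
      rw [votes_eq_card pref P _ (Finset.univ ×ˢ ({0, 1} : Finset (Fin 5)))
        (fun v => by
          obtain ⟨w, i⟩ := v
          simp [hchar0 w i, Finset.mem_product]), Finset.card_product]
      simp [hn, mul_comm]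
    set M : Finset W := Finset.univ.filter fun w => ¬ Dom w with hM
    set m : ℕ := M.card with hm
    have v1 : votes pref P {Sum.inr 1} = 2 * n + m := by
      have hdisj : Disjoint (Finset.univ ×ˢ ({2, 3} : Finset (Fin 5)))
          (M ×ˢ ({4} : Finset (Fin 5))) := by
        rw [Finset.disjoint_left]
        rintro ⟨w, i⟩ h1 h2
        simp only [Finset.mem_product, Finset.mem_insert, Finset.mem_singleton] at h1 h2
        rcases h1.2 with rfl | rfl <;> simp at h2
      rw [votes_eq_card pref P _
        (Finset.univ ×ˢ ({2, 3} : Finset (Fin 5)) ∪ M ×ˢ ({4} : Finset (Fin 5)))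
        (fun v => by
          obtain ⟨w, i⟩ := v
          simp only [Finset.mem_union, Finset.mem_product, Finset.mem_univ, true_and,
            Finset.mem_singleton, Finset.mem_insert, hM, Finset.mem_filter,
            exists_eq_left, hchar1 w i]
          tauto),
        Finset.card_union_of_disjoint hdisj, Finset.card_product, Finset.card_product]
      simp [hn, mul_comm, hm]
    have v2 : votes pref P {Sum.inr 2} = 0 := by
      rw [votes_eq_card pref P _ (∅ : Finset (W × Fin 5))
        (fun v => by
          obtain ⟨w, i⟩ := v
          simp only [Finset.mem_singleton, exists_eq_left, Finset.notMem_empty, iff_false]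
          exact hchar2 w i), Finset.card_empty]
    have vb : ∀ u : W, votes pref P {Sum.inl u} ≤ n := by
      intro u
      calc votes pref P {Sum.inl u} ≤ (Finset.univ ×ˢ ({4} : Finset (Fin 5))).card := by
            refine votes_le_card pref P _ _ fun v hv => ?_
            obtain ⟨w, i⟩ := v
            simp only [Finset.mem_singleton, exists_eq_left] at hv
            simp only [Finset.mem_product, Finset.mem_univ, true_and, Finset.mem_singleton]
            fin_cases i
            · exact absurd (topOf_eq' hv (top01 w 0 (Or.inl rfl))) (by simp)
            · exact absurd (topOf_eq' hv (top01 w 1 (Or.inr rfl))) (by simp)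
            · exact absurd (topOf_eq' hv (top23 w 2 (Or.inl rfl))) (by simp)
            · exact absurd (topOf_eq' hv (top23 w 3 (Or.inr rfl))) (by simp)
            · rfl
        _ = n := by rw [Finset.card_product]; simp [hn]
    -- active vote totals
    have hav0 : activeVotes pref P (2 * n) {Sum.inr 0} = 2 * n := by
      rw [activeVotes, Finset.sum_singleton, v0, if_pos le_rfl]
    have havP : activeVotes pref P (2 * n) P = 4 * n + m := by
      have hd3 : Disjoint ({Sum.inr 0, Sum.inr 1, Sum.inr 2} : Finset (W ⊕ Fin 3)) Sp := by
        rw [Finset.disjoint_left]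
        intro a ha haSp
        obtain ⟨u, -, rfl⟩ := Finset.mem_image.mp (hSp haSp)
        simp at ha
      rw [activeVotes, hPdef, Finset.sum_union hd3]
      have h1 : ∑ p ∈ ({Sum.inr 0, Sum.inr 1, Sum.inr 2} : Finset (W ⊕ Fin 3)),
          (if 2 * n ≤ votes pref P {p} then votes pref P {p} else 0) = 4 * n + m := by
        rw [Finset.sum_insert (by simp), Finset.sum_insert (by simp), Finset.sum_singleton]
        rw [v0, v1, v2, if_pos le_rfl, if_pos (by omega), if_neg (by omega)]
        ring
      have h2 : ∑ p ∈ Sp,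
          (if 2 * n ≤ votes pref P {p} then votes pref P {p} else 0) = 0 := by
        refine Finset.sum_eq_zero fun p hp => ?_
        obtain ⟨u, -, rfl⟩ := Finset.mem_image.mp (hSp hp)
        have := vb u
        rw [if_neg (by omega)]
      rw [h1, h2]
      omega
    -- final equivalence
    rw [activeFrac, hav0, havP]
    have hposQ : (0 : ℚ) < ((4 * n + m : ℕ) : ℚ) := by
      have : 0 < 4 * n + m := by omega
      exact_mod_cast this
    constructor
    · intro h w
      by_contra hc
      have hwM : w ∈ M := Finset.mem_filter.mpr ⟨Finset.mem_univ w, hc⟩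
      have hm1 : 1 ≤ m := Finset.card_pos.mpr ⟨w, hwM⟩
      rw [le_div_iff₀ hposQ] at h
      have hcast : ((4 * n + m : ℕ) : ℚ) = 4 * (n : ℚ) + (m : ℚ) := by push_cast; ring
      have hcast2 : ((2 * n : ℕ) : ℚ) = 2 * (n : ℚ) := by push_cast; ring
      rw [hcast, hcast2] at h
      have hmq : (1 : ℚ) ≤ (m : ℚ) := by exact_mod_cast hm1
      linarith
    · intro h
      have hm0 : m = 0 := Finset.card_eq_zero.mpr
        (Finset.filter_eq_empty_iff.mpr fun w _ => not_not_intro (h w))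
      rw [hm0]
      have hnq : (0 : ℚ) < (n : ℚ) := by exact_mod_cast hn0
      rw [div_le_div_iff₀ (by norm_num) (by push_cast; linarith)]
      push_cast
      linarith
  constructor
  · rintro ⟨W', hcard, hdom⟩
    refine ⟨W'.image Sum.inl, ?_, ?_, ?_⟩
    · intro x hx
      obtain ⟨u, -, rfl⟩ := Finset.mem_image.mp hx
      exact Finset.mem_image.mpr ⟨u, Finset.mem_univ u, rfl⟩
    · exact Finset.card_image_le.trans hcard
    · rw [main _ (fun x hx => by
        obtain ⟨u, -, rfl⟩ := Finset.mem_image.mp hx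
        exact Finset.mem_image.mpr ⟨u, Finset.mem_univ u, rfl⟩)]
      intro w
      obtain ⟨u, huW', hu⟩ := hdom w
      exact ⟨u, hu.imp id fun h => h.symm, Finset.mem_image_of_mem _ huW'⟩
  · rintro ⟨Sp, hsub, hcard, hfrac⟩
    have hall := (main Sp hsub).mp hfrac
    refine ⟨Finset.univ.filter fun u => Sum.inl u ∈ Sp, ?_, ?_⟩
    · calc (Finset.univ.filter fun u => (Sum.inl u : W ⊕ Fin 3) ∈ Sp).card
          = ((Finset.univ.filter fun u => (Sum.inl u : W ⊕ Fin 3) ∈ Sp).image Sum.inl).card :=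
            (Finset.card_image_of_injective _ Sum.inl_injective).symm
        _ ≤ Sp.card := Finset.card_le_card (by
            intro x hx
            obtain ⟨u, hu, rfl⟩ := Finset.mem_image.mp hx
            exact (Finset.mem_filter.mp hu).2)
        _ ≤ k := hcard
    · intro w
      obtain ⟨u, hu, huSp⟩ := hall w
      exact ⟨u, by simp [huSp], hu.imp id fun h => h.symm⟩
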